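/- arXiv:2602.12149 — 3 statements merged into one kernel-verified Lean document; each statement's English description precedes it below -/
import Mathlib

section
/- For a filter 𝔽 on 𝒫(X) and B ⊆ X: B belongs to the grill of rdc(𝔽^#) (where rdc(𝔽^#) := {⋃_{C ∈ ℋ} C : ℋ ∈ 𝔽^#}) if and only if B⁻ := {C ⊆ X : C ∩ B ≠ ∅} belongs to 𝔽. -/
/-- The grill of a family of subsets. -/
def grill {α : Type*} (𝒜 : Set (Set α)) : Set (Set α) :=
  {B | ∀ A ∈ 𝒜, (B ∩ A).Nonempty}

/-- The reduction of a family of families of subsets of `X`. -/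
def rdc {X : Type*} (𝔸 : Set (Set (Set X))) : Set (Set X) :=
  Set.sUnion '' 𝔸

lemma mem_grill_grill_iff {α : Type*} (𝔽 : Filter α) (A : Set α) :
    A ∈ grill (grill 𝔽.sets) ↔ A ∈ 𝔽 := by
  constructor
  · intro h
    by_contra hA
    have hc : Aᶜ ∈ grill 𝔽.sets := by
      intro F hF
      by_contra he
      rw [Set.not_nonempty_iff_eq_empty] at he
      exact hA (𝔽.mem_of_superset hF (by
        intro x hx
        by_contra hx'
        exact Set.eq_empty_iff_forall_notMem.mp he x ⟨hx', hx⟩))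
    have := h Aᶜ hc
    simp at this
  · intro hA S hS
    have := hS A hA
    rwa [Set.inter_comm]

/-- `B ∈ (rdc (𝔽^#))^#` iff `B⁻ ∈ 𝔽`. -/
theorem mem_grill_rdc_grill_iff {X : Type*} (𝔽 : Filter (Set X)) (B : Set X) :
    B ∈ grill (rdc (grill 𝔽.sets)) ↔ {C : Set X | (C ∩ B).Nonempty} ∈ 𝔽 := by
  rw [← mem_grill_grill_iff]
  constructor
  · intro h ℋ hℋ
    obtain ⟨x, hxB, C, hCℋ, hxC⟩ := h (⋃₀ ℋ) ⟨ℋ, hℋ, rfl⟩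
    exact ⟨C, ⟨⟨x, hxC, hxB⟩, hCℋ⟩⟩
  · rintro h S ⟨ℋ, hℋ, rfl⟩
    obtain ⟨C, ⟨x, hxC, hxB⟩, hCℋ⟩ := h ℋ hℋ
    exact ⟨x, hxB, C, hCℋ, hxC⟩
end

section
/- If (X, λ) is an approach space (satisfying the diagonal filter condition), then for all ε, α ∈ [0,∞] and every filter ℱ on X, one has {adh_λ ℱ ≤ ε}^(α) ⊆ {adh_λ ℱ ≤ ε + α}. -/
open ENNReal

variable {X : Type*}

/-- Adherence function of a set in a preconvergence approach space. -/
noncomputable def adhSet (lam : Filter X → X → ℝ≥0∞) (A : Set X) (x : X) : ℝ≥0∞ :=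
  ⨅ (U : Ultrafilter X) (_ : A ∈ U), lam (↑U) x

/-- Adherence function of a filter. -/
noncomputable def adhF (lam : Filter X → X → ℝ≥0∞) (F : Filter X) (x : X) : ℝ≥0∞ :=
  ⨅ (U : Ultrafilter X) (_ : (↑U : Filter X) ≤ F), lam (↑U) x

/-- `A^(ε)`. -/
noncomputable def enlarge (lam : Filter X → X → ℝ≥0∞) (A : Set X) (ε : ℝ≥0∞) : Set X :=
  {x | adhSet lam A x ≤ ε}

/-- In an approach space, `{adh ℱ ≤ ε}^(α) ⊆ {adh ℱ ≤ ε + α}`. -/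
theorem enlarge_adh_le (lam : Filter X → X → ℝ≥0∞)
    (hmono : ∀ F G : Filter X, F ≤ G → ∀ x, lam F x ≤ lam G x)
    (hcent : ∀ x : X, lam (pure x) x = 0)
    (hdiag : ∀ (𝒢 : X → Filter X) (F : Filter X) (x₀ : X),
      lam (F.bind 𝒢) x₀ ≤ lam F x₀ + ⨆ t : X, lam (𝒢 t) t)
    (hattain : ∀ F : Filter X, F.NeBot → ∀ x : X,
      ∃ U : Ultrafilter X, (↑U : Filter X) ≤ F ∧ lam (↑U) x = adhF lam F x)
    (F : Filter X) (ε α : ℝ≥0∞) :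
    enlarge lam {x | adhF lam F x ≤ ε} α ⊆ {x | adhF lam F x ≤ ε + α} := by
  classical
  intro x₀ hx₀
  set A : Set X := {x | adhF lam F x ≤ ε} with hA
  simp only [enlarge, Set.mem_setOf_eq] at hx₀ ⊢
  rcases eq_or_ne ε ⊤ with hε | hε
  · simp [hε]
  rcases eq_or_ne F ⊥ with hF | hF
  · -- F = ⊥ : then A is empty, so adhSet = ⊤ ≤ α forces α = ⊤
    have hAe : A = ∅ := by
      ext t
      simp only [hA, Set.mem_setOf_eq, Set.mem_empty_iff_false, iff_false, not_le]
      have : adhF lam F t = ⊤ := by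
        rw [adhF, hF]
        refine iInf_eq_top.2 fun U => iInf_eq_top.2 fun hU => absurd (le_bot_iff.1 hU) ?_
        exact U.neBot.ne
      rw [this]; exact lt_top_iff_ne_top.2 hε
    have : adhSet lam A x₀ = ⊤ := by
      rw [adhSet]
      refine iInf_eq_top.2 fun U => iInf_eq_top.2 fun hU => ?_
      rw [hAe] at hU
      exact absurd hU (Filter.empty_notMem _)
    rw [this, top_le_iff] at hx₀
    simp [hx₀]
  -- Main case: F ≠ ⊥
  haveI : F.NeBot := ⟨hF⟩
  -- Define the selection 𝒢
  set 𝒢 : X → Filter X := fun t =>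
    if h : adhF lam F t ≤ ε then ↑(hattain F ‹F.NeBot› t).choose else pure t with h𝒢
  have h𝒢ne : ∀ t, (𝒢 t).NeBot := by
    intro t
    by_cases h : adhF lam F t ≤ ε
    · simp only [h𝒢, dif_pos h]; exact (hattain F ‹F.NeBot› t).choose.neBot
    · simp only [h𝒢, dif_neg h]; exact Filter.pure_neBot
  have h𝒢le : ∀ t ∈ A, 𝒢 t ≤ F := by
    intro t ht
    have h : adhF lam F t ≤ ε := ht
    simp only [h𝒢, dif_pos h]
    exact (hattain F ‹F.NeBot› t).choose_spec.1
  have h𝒢sup : (⨆ t : X, lam (𝒢 t) t) ≤ ε := by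
    refine iSup_le fun t => ?_
    by_cases h : adhF lam F t ≤ ε
    · simp only [h𝒢, dif_pos h]
      rw [(hattain F ‹F.NeBot› t).choose_spec.2]; exact h
    · simp only [h𝒢, dif_neg h, hcent t]; positivity
  -- Key claim: for every ultrafilter U containing A, adhF F x₀ ≤ ε + lam U x₀
  have key : ∀ U : Ultrafilter X, A ∈ U → adhF lam F x₀ ≤ ε + lam (↑U) x₀ := by
    intro U hU
    have hbind_le : (↑U : Filter X).bind 𝒢 ≤ F := by
      intro s hs
      rw [Filter.mem_bind']
      exact U.toFilter.mem_of_superset hU fun t ht => h𝒢le t ht hs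
    have hbind_ne : ((↑U : Filter X).bind 𝒢).NeBot := by
      refine Filter.forall_mem_nonempty_iff_neBot.1 fun s hs => ?_
      rw [Filter.mem_bind'] at hs
      obtain ⟨t, ht⟩ := U.neBot.nonempty_of_mem hs
      exact (h𝒢ne t).nonempty_of_mem ht
    obtain ⟨V, hV⟩ := Ultrafilter.exists_le ((↑U : Filter X).bind 𝒢)
    have h1 : adhF lam F x₀ ≤ lam (↑V) x₀ :=
      iInf₂_le_of_le V (hV.trans hbind_le) le_rfl
    have h2 : lam (↑V) x₀ ≤ lam ((↑U : Filter X).bind 𝒢) x₀ := hmono _ _ hV x₀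
    have h3 : lam ((↑U : Filter X).bind 𝒢) x₀ ≤ lam (↑U) x₀ + ⨆ t, lam (𝒢 t) t :=
      hdiag 𝒢 ↑U x₀
    calc adhF lam F x₀ ≤ lam ((↑U : Filter X).bind 𝒢) x₀ := h1.trans h2
      _ ≤ lam (↑U) x₀ + ⨆ t, lam (𝒢 t) t := h3
      _ ≤ lam (↑U) x₀ + ε := add_le_add_right h𝒢sup _
      _ = ε + lam (↑U) x₀ := add_comm _ _
  -- Conclude
  have : adhF lam F x₀ ≤ ε + adhSet lam A x₀ := by
    rw [adhSet, ENNReal.add_iInf]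
    refine le_iInf fun U => ?_
    rw [ENNReal.add_iInf]
    exact le_iInf fun hU => key U hU
  exact this.trans (add_le_add_right hx₀ ε)
end

section
/- If (X, λ) satisfies the diagonal filter condition λ(𝒢(ℱ))(x₀) ≤ λ(ℱ)(x₀) + sup_t λ(𝒢(t))(t) for all selections 𝒢 : X → Filter X, filters ℱ, and points x₀, then adh_λ A ≤ adh_λ (A^(ε)) + ε pointwise, for every A ⊆ X and every ε ∈ [0,∞]. -/
open ENNReal

variable {X : Type*}

/-- The diagonal filter condition implies `adh A ≤ adh (A^(ε)) + ε`. -/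
theorem diag_implies_adh_enlarge (lam : Filter X → X → ℝ≥0∞)
    (hmono : ∀ F G : Filter X, F ≤ G → ∀ x, lam F x ≤ lam G x)
    (hcent : ∀ x : X, lam (pure x) x = 0)
    (hdiag : ∀ (𝒢 : X → Filter X) (F : Filter X) (x₀ : X),
      lam (F.bind 𝒢) x₀ ≤ lam F x₀ + ⨆ t : X, lam (𝒢 t) t) :
    ∀ (A : Set X) (ε : ℝ≥0∞) (x : X),
      adhSet lam A x ≤ adhSet lam (enlarge lam A ε) x + ε := by
  intro A ε x
  set B := enlarge lam A ε with hB
  rcases eq_top_or_lt_top ε with hε | hε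
  · simp [hε]
  rcases eq_top_or_lt_top (adhSet lam B x) with hb | hb
  · simp [hb, top_add]
  refine ENNReal.le_of_forall_pos_le_add fun δ hδ hlt => ?_
  -- key claim : for every ultrafilter U containing B,
  -- adhSet lam A x ≤ lam U x + (ε + δ)
  have key : ∀ U : Ultrafilter X, B ∈ U →
      adhSet lam A x ≤ lam (↑U) x + (ε + δ) := by
    intro U hBU
    have hεδ : ε < ε + δ :=
      ENNReal.lt_add_right hε.ne (by exact_mod_cast hδ.ne')
    -- choose a selection of ultrafilters
    have hsel : ∀ t : X, t ∈ B → ∃ V : Ultrafilter X, A ∈ V ∧ lam (↑V) t ≤ ε + δ := by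
      intro t ht
      have h1 : adhSet lam A t < ε + δ := lt_of_le_of_lt ht hεδ
      rw [adhSet, iInf_lt_iff] at h1
      obtain ⟨V, hV⟩ := h1
      rw [iInf_lt_iff] at hV
      obtain ⟨hAV, hVlt⟩ := hV
      exact ⟨V, hAV, hVlt.le⟩
    classical
    choose! G hGA hGle using hsel
    set 𝒢 : X → Ultrafilter X := fun t => if t ∈ B then G t else pure t with h𝒢
    have hsup : (⨆ t : X, lam (↑(𝒢 t)) t) ≤ ε + δ := by
      refine iSup_le fun t => ?_
      by_cases ht : t ∈ B
      · simpa [h𝒢, ht] using hGle t ht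
      · simp [h𝒢, ht, Ultrafilter.coe_pure, hcent t]
    have hAbind : A ∈ U.bind 𝒢 := by
      have : {t | A ∈ 𝒢 t} ∈ U := by
        filter_upwards [hBU] with t ht
        simpa [h𝒢, ht] using hGA t ht
      exact this
    have hcoe : (↑(U.bind 𝒢) : Filter X) = (↑U : Filter X).bind fun t => ↑(𝒢 t) := rfl
    have h2 : lam (↑(U.bind 𝒢)) x ≤ lam (↑U) x + (ε + δ) := by
      rw [hcoe]
      exact le_trans (hdiag (fun t => ↑(𝒢 t)) (↑U) x) (add_le_add le_rfl hsup)
    calc adhSet lam A x ≤ lam (↑(U.bind 𝒢)) x := by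
          exact iInf₂_le (U.bind 𝒢) hAbind
      _ ≤ lam (↑U) x + (ε + δ) := h2
  have : adhSet lam A x - (ε + δ) ≤ adhSet lam B x := by
    refine le_iInf₂ fun U hU => ?_
    exact tsub_le_iff_right.mpr (key U hU)
  have := tsub_le_iff_right.mp this
  calc adhSet lam A x ≤ adhSet lam B x + (ε + δ) := this
    _ = adhSet lam B x + ε + δ := by rw [add_assoc]
end
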